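/- Let N ≥ 1, let F₁,…,F_N > 0 be task cycle requirements and Δt₂,…,Δt_{N+1} > 0 slot durations. There exist nonnegative frequencies f_{n,m} for 1 ≤ n ≤ N, n+1 ≤ m ≤ N+1, satisfying (i) ∑_{n=1}^{m−1} f_{n,m} ≤ F_max for every m ∈ {2,…,N+1}, and (ii) ∑_{m=n+1}^{N+1} f_{n,m}·Δt_m ≥ F_n for every n, if and only if F_max ≥ max_{n∈{1,…,N}} (∑_{i=n}^{N} F_i) / (∑_{i=n+1}^{N+1} Δt_i). -/

import Mathlib

/-- Pointwise clamp identity used for both telescoping arguments. -/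
lemma clamp_diff (a b u v : ℝ) (hab : a ≤ b) (huv : u ≤ v) :
    (min b v - max a u) ⊔ 0 = min b (max a v) - min b (max a u) := by
  simp only [min_def, max_def]
  split_ifs <;> linarith

/-- Telescoping sum over `Icc`. -/
lemma telescope_Icc (g : ℕ → ℝ) : ∀ r l, l ≤ r + 1 →
    ∑ m ∈ Finset.Icc l r, (g m - g (m + 1)) = g l - g (r + 1) := by
  intro r
  induction r with
  | zero => intro l hl; interval_cases l <;> simp
  | succ r ih =>
    intro l hl
    rcases le_or_gt l (r + 1) with h | h
    · rw [Finset.sum_Icc_succ_top h, ih l h]; ring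
    · have hl2 : l = r + 2 := by omega
      subst hl2
      simp

lemma Icc_insert_bot {a b : ℕ} (h : a ≤ b) :
    Finset.Icc a b = insert a (Finset.Icc (a + 1) b) := by
  ext x; simp only [Finset.mem_Icc, Finset.mem_insert]; omega

/-- General feasibility of the asynchronous computation resource allocation:
nonnegative frequencies f_{n,m} satisfying the per-slot capacity constraints and
the completion constraints exist iff
F_max ≥ max_n (∑_{i=n}^{N} F_i)/(∑_{i=n+1}^{N+1} Δt_i). -/
theorem stmt_5 (N : ℕ) (hN : 1 ≤ N) (Fmax : ℝ) (F Δt : ℕ → ℝ)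
    (hF : ∀ n ∈ Finset.Icc 1 N, 0 < F n)
    (hΔt : ∀ m ∈ Finset.Icc 2 (N + 1), 0 < Δt m) :
    (∃ f : ℕ → ℕ → ℝ,
        (∀ n ∈ Finset.Icc 1 N, ∀ m ∈ Finset.Icc (n + 1) (N + 1), 0 ≤ f n m) ∧
        (∀ m ∈ Finset.Icc 2 (N + 1), ∑ n ∈ Finset.Icc 1 (m - 1), f n m ≤ Fmax) ∧
        (∀ n ∈ Finset.Icc 1 N,
          F n ≤ ∑ m ∈ Finset.Icc (n + 1) (N + 1), f n m * Δt m)) ↔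
      ∀ n ∈ Finset.Icc 1 N,
        (∑ i ∈ Finset.Icc n N, F i) / (∑ i ∈ Finset.Icc (n + 1) (N + 1), Δt i) ≤
          Fmax := by
  constructor
  · rintro ⟨f, hnn, hcap, hcomp⟩ n hn
    simp only [Finset.mem_Icc] at hn
    have hT : 0 < ∑ i ∈ Finset.Icc (n + 1) (N + 1), Δt i := by
      apply Finset.sum_pos
      · intro i hi
        exact hΔt i (by simp only [Finset.mem_Icc] at hi ⊢; omega)
      · exact Finset.nonempty_Icc.mpr (by omega)
    rw [div_le_iff₀ hT]
    calc ∑ i ∈ Finset.Icc n N, F i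
        ≤ ∑ i ∈ Finset.Icc n N, ∑ m ∈ Finset.Icc (i + 1) (N + 1), f i m * Δt m := by
          apply Finset.sum_le_sum
          intro i hi
          exact hcomp i (by simp only [Finset.mem_Icc] at hi ⊢; omega)
      _ = ∑ m ∈ Finset.Icc (n + 1) (N + 1), ∑ i ∈ Finset.Icc n (m - 1), f i m * Δt m := by
          apply Finset.sum_comm'
          intro i m
          simp only [Finset.mem_Icc]
          omega
      _ ≤ ∑ m ∈ Finset.Icc (n + 1) (N + 1), Fmax * Δt m := by
          apply Finset.sum_le_sum
          intro m hm
          simp only [Finset.mem_Icc] at hm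
          have hΔm : 0 < Δt m := hΔt m (by simp only [Finset.mem_Icc]; omega)
          have hsub : ∑ i ∈ Finset.Icc n (m - 1), f i m ≤
              ∑ i ∈ Finset.Icc 1 (m - 1), f i m := by
            apply Finset.sum_le_sum_of_subset_of_nonneg
            · apply Finset.Icc_subset_Icc_left; omega
            · intro i hi _
              simp only [Finset.mem_Icc] at hi
              exact hnn i (by simp only [Finset.mem_Icc]; omega)
                m (by simp only [Finset.mem_Icc]; omega)
          have hcapm := hcap m (by simp only [Finset.mem_Icc]; omega)
          calc ∑ i ∈ Finset.Icc n (m - 1), f i m * Δt m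
              = (∑ i ∈ Finset.Icc n (m - 1), f i m) * Δt m := by rw [Finset.sum_mul]
            _ ≤ Fmax * Δt m := by
                apply mul_le_mul_of_nonneg_right _ hΔm.le
                exact le_trans hsub hcapm
      _ = Fmax * ∑ i ∈ Finset.Icc (n + 1) (N + 1), Δt i := by rw [Finset.mul_sum]
  · intro hcond
    set W : ℕ → ℝ := fun n => ∑ i ∈ Finset.Icc n N, F i with hWdef
    set S : ℕ → ℝ := fun m => Fmax * ∑ j ∈ Finset.Icc m (N + 1), Δt j with hSdef
    have hTpos : ∀ n, 1 ≤ n → n ≤ N → 0 < ∑ i ∈ Finset.Icc (n + 1) (N + 1), Δt i := by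
      intro n h1 h2
      apply Finset.sum_pos
      · intro i hi
        exact hΔt i (by simp only [Finset.mem_Icc] at hi ⊢; omega)
      · exact Finset.nonempty_Icc.mpr (by omega)
    have hFmax : 0 < Fmax := by
      have h1 : (1 : ℕ) ∈ Finset.Icc 1 N := by simp [hN]
      have hc := hcond 1 h1
      have hW1 : 0 < ∑ i ∈ Finset.Icc 1 N, F i :=
        Finset.sum_pos (fun i hi => hF i hi) (Finset.nonempty_Icc.mpr hN)
      have hT1 := hTpos 1 le_rfl hN
      calc (0:ℝ) < (∑ i ∈ Finset.Icc 1 N, F i) /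
            (∑ i ∈ Finset.Icc (1 + 1) (N + 1), Δt i) := div_pos hW1 hT1
        _ ≤ Fmax := hc
    have hWstep : ∀ n, n ≤ N → W n = F n + W (n + 1) := by
      intro n h
      simp only [hWdef]
      rw [Icc_insert_bot h, Finset.sum_insert (by simp)]
    have hWnonneg : ∀ n, 1 ≤ n → 0 ≤ W n := by
      intro n h
      apply Finset.sum_nonneg
      intro i hi
      exact (hF i (by simp only [Finset.mem_Icc] at hi ⊢; omega)).le
    have hWmono : ∀ n, 1 ≤ n → n ≤ N → W (n + 1) ≤ W n := by
      intro n h1 h2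
      rw [hWstep n h2]
      have := hF n (by simp only [Finset.mem_Icc]; omega)
      linarith
    have hSstep : ∀ m, 2 ≤ m → m ≤ N + 1 → S m = Fmax * Δt m + S (m + 1) := by
      intro m h1 h2
      simp only [hSdef]
      rw [Icc_insert_bot h2, Finset.sum_insert (by simp), mul_add]
    have hSmono : ∀ m, 2 ≤ m → m ≤ N + 1 → S (m + 1) ≤ S m := by
      intro m h1 h2
      rw [hSstep m h1 h2]
      have hΔm : 0 < Δt m := hΔt m (by simp only [Finset.mem_Icc]; omega)
      nlinarith
    have hSN2 : S (N + 2) = 0 := by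
      simp only [hSdef]
      rw [Finset.Icc_eq_empty (by omega)]
      simp
    have hkey : ∀ n, 1 ≤ n → n ≤ N → W n ≤ S (n + 1) := by
      intro n h1 h2
      have hc := hcond n (by simp only [Finset.mem_Icc]; omega)
      rw [div_le_iff₀ (hTpos n h1 h2)] at hc
      simpa [hSdef, mul_comm] using hc
    refine ⟨fun n m => ((min (W n) (S m) - max (W (n + 1)) (S (m + 1))) ⊔ 0) / Δt m,
      ?_, ?_, ?_⟩
    · intro n hn m hm
      simp only [Finset.mem_Icc] at hn hm
      exact div_nonneg le_sup_right (hΔt m (by simp only [Finset.mem_Icc]; omega)).le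
    · intro m hm
      simp only [Finset.mem_Icc] at hm
      have hΔm : 0 < Δt m := hΔt m (by simp only [Finset.mem_Icc]; omega)
      rw [← Finset.sum_div, div_le_iff₀ hΔm]
      have hcongr : ∀ n ∈ Finset.Icc 1 (m - 1),
          (min (W n) (S m) - max (W (n + 1)) (S (m + 1))) ⊔ 0 =
            min (S m) (max (S (m + 1)) (W n)) - min (S m) (max (S (m + 1)) (W (n + 1))) := by
        intro n hn
        simp only [Finset.mem_Icc] at hn
        rw [min_comm (W n) (S m), max_comm (W (n + 1)) (S (m + 1))]
        exact clamp_diff (S (m + 1)) (S m) (W (n + 1)) (W n)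
          (hSmono m hm.1 hm.2) (hWmono n hn.1 (by omega))
      rw [Finset.sum_congr rfl hcongr,
        telescope_Icc (fun n => min (S m) (max (S (m + 1)) (W n))) (m - 1) 1 (by omega)]
      have hmm : m - 1 + 1 = m := by omega
      rw [hmm]
      have h1 : min (S m) (max (S (m + 1)) (W 1)) ≤ S m := min_le_left _ _
      have h2 : S (m + 1) ≤ min (S m) (max (S (m + 1)) (W m)) :=
        le_min (hSmono m hm.1 hm.2) (le_max_left _ _)
      have := hSstep m hm.1 hm.2
      linarith
    · intro n hn
      simp only [Finset.mem_Icc] at hn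
      have hterm : ∀ m ∈ Finset.Icc (n + 1) (N + 1),
          ((min (W n) (S m) - max (W (n + 1)) (S (m + 1))) ⊔ 0) / Δt m * Δt m =
            min (W n) (max (W (n + 1)) (S m)) - min (W n) (max (W (n + 1)) (S (m + 1))) := by
        intro m hm
        simp only [Finset.mem_Icc] at hm
        have hΔm : (Δt m) ≠ 0 := (hΔt m (by simp only [Finset.mem_Icc]; omega)).ne'
        rw [div_mul_cancel₀ _ hΔm]
        exact clamp_diff (W (n + 1)) (W n) (S (m + 1)) (S m)
          (hWmono n hn.1 hn.2) (hSmono m (by omega) (by omega))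
      rw [Finset.sum_congr rfl hterm,
        telescope_Icc (fun m => min (W n) (max (W (n + 1)) (S m))) (N + 1) (n + 1) (by omega)]
      have ha : min (W n) (max (W (n + 1)) (S (n + 1))) = W n := by
        have h1 := hkey n hn.1 hn.2
        have h2 := hWmono n hn.1 hn.2
        rw [max_eq_right (le_trans h2 h1), min_eq_left h1]
      have hb : min (W n) (max (W (n + 1)) (S (N + 1 + 1))) = W (n + 1) := by
        have h0 : S (N + 1 + 1) = 0 := hSN2
        rw [h0, max_eq_left (hWnonneg (n + 1) (by omega)),
          min_eq_right (hWmono n hn.1 hn.2)]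
      rw [ha, hb, hWstep n hn.2]
      linarith
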